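/- For fixed λ ≥ 0 and positive integer K, the function γ ↦ Σ_{n=0}^{∞} ((γ/2)^n e^{-γ/2} / n!) · Γ(n+K, λ/2)/Γ(n+K) is monotonically non-decreasing on [0, ∞). -/

import Mathlib

set_option maxHeartbeats 1000000

noncomputable def upperGamma (a x : ℝ) : ℝ := ∫ t in Set.Ioi x, t ^ (a - 1) * Real.exp (-t)

open MeasureTheory Set Real

lemma upperGamma_integrableOn {a x : ℝ} (ha : 0 < a) (hx : 0 ≤ x) :
    IntegrableOn (fun t : ℝ => t ^ (a - 1) * Real.exp (-t)) (Set.Ioi x) := by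
  have h := (Real.GammaIntegral_convergent ha).mono_set (Set.Ioi_subset_Ioi hx)
  exact h.congr_fun (fun t _ => mul_comm _ _) measurableSet_Ioi

lemma upperGamma_nonneg {a x : ℝ} (hx : 0 ≤ x) : 0 ≤ upperGamma a x := by
  apply setIntegral_nonneg measurableSet_Ioi
  intro t ht
  exact mul_nonneg (Real.rpow_nonneg (le_of_lt (lt_of_le_of_lt hx ht)) _) (Real.exp_nonneg _)

lemma upperGamma_le_Gamma {a x : ℝ} (ha : 0 < a) (hx : 0 ≤ x) :
    upperGamma a x ≤ Real.Gamma a := by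
  rw [Real.Gamma_eq_integral ha]
  have h : upperGamma a x = ∫ t in Set.Ioi x, Real.exp (-t) * t ^ (a - 1) := by
    unfold upperGamma; simp_rw [mul_comm]
  rw [h]
  apply setIntegral_mono_set (Real.GammaIntegral_convergent ha)
  · filter_upwards [ae_restrict_mem measurableSet_Ioi] with t ht
    exact mul_nonneg (Real.exp_nonneg _) (Real.rpow_nonneg (le_of_lt ht) _)
  · exact HasSubset.Subset.eventuallyLE (Set.Ioi_subset_Ioi hx)

lemma upperGamma_succ {a x : ℝ} (ha : 1 ≤ a) (hx : 0 ≤ x) :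
    upperGamma (a + 1) x = x ^ a * Real.exp (-x) + a * upperGamma a x := by
  have ha0 : 0 < a := lt_of_lt_of_le one_pos ha
  have h1 : IntegrableOn (fun t : ℝ => t ^ a * Real.exp (-t)) (Set.Ioi x) := by
    have := upperGamma_integrableOn (by linarith : (0:ℝ) < a + 1) hx
    simpa using this
  have h2 : IntegrableOn (fun t : ℝ => a * (t ^ (a - 1) * Real.exp (-t))) (Set.Ioi x) :=
    (upperGamma_integrableOn ha0 hx).const_mul a
  have key : (∫ t in Set.Ioi x, (t ^ a * Real.exp (-t) - a * (t ^ (a - 1) * Real.exp (-t))))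
      = 0 - (-(x ^ a * Real.exp (-x))) := by
    apply integral_Ioi_of_hasDerivAt_of_tendsto
        (f := fun t : ℝ => -(t ^ a * Real.exp (-t)))
    · apply ContinuousWithinAt.neg
      apply ContinuousWithinAt.mul
      · exact (Real.continuousAt_rpow_const x a (Or.inr ha0.le)).continuousWithinAt
      · exact (Real.continuous_exp.comp continuous_neg).continuousAt.continuousWithinAt
    · intro t ht
      have ht0 : 0 < t := lt_of_le_of_lt hx ht
      have hd1 : HasDerivAt (fun t : ℝ => t ^ a) (a * t ^ (a - 1)) t :=
        Real.hasDerivAt_rpow_const (Or.inl ht0.ne')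
      have hd2 : HasDerivAt (fun t : ℝ => Real.exp (-t)) (Real.exp (-t) * (-1)) t :=
        (Real.hasDerivAt_exp (-t)).comp t (hasDerivAt_neg t)
      have := (hd1.mul hd2).neg
      convert this using 1
      · rfl
      · ring
    · exact h1.sub h2
    · have := (tendsto_rpow_mul_exp_neg_mul_atTop_nhds_zero a 1 one_pos).neg
      simp only [neg_zero, one_mul] at this ⊢
      convert this using 2 with t
      simp [neg_one_mul]
  have split : upperGamma (a + 1) x
      = (∫ t in Set.Ioi x, (t ^ a * Real.exp (-t) - a * (t ^ (a - 1) * Real.exp (-t))))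
        + a * upperGamma a x := by
    unfold upperGamma
    rw [integral_sub h1 h2, integral_const_mul]
    simp [add_sub_cancel_right]
  rw [split, key]
  ring

lemma aux_summable {c : ℕ → ℝ} (hc0 : ∀ n, 0 ≤ c n) (hc1 : ∀ n, c n ≤ 1)
    {μ : ℝ} (hμ : 0 ≤ μ) : Summable (fun n : ℕ => c n * μ ^ n / n.factorial) := by
  apply Summable.of_nonneg_of_le
      (fun n => div_nonneg (mul_nonneg (hc0 n) (pow_nonneg hμ n)) (by positivity))
      (fun n => ?_) (Real.summable_pow_div_factorial μ)
  have hfac : (0:ℝ) < (n.factorial : ℝ) := by positivity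
  apply (div_le_div_iff_of_pos_right hfac).2
  have h1 : c n * μ ^ n ≤ 1 * μ ^ n :=
    mul_le_mul_of_nonneg_right (hc1 n) (pow_nonneg hμ n)
  rwa [one_mul] at h1

lemma aux_key {c : ℕ → ℝ} (hc0 : ∀ n, 0 ≤ c n) (hc1 : ∀ n, c n ≤ 1) (hm : Monotone c)
    {μ1 μ2 : ℝ} (hμ1 : 0 ≤ μ1) (h12 : μ1 ≤ μ2) :
    Real.exp (μ2 - μ1) * ∑' n : ℕ, c n * μ1 ^ n / n.factorial
      ≤ ∑' n : ℕ, c n * μ2 ^ n / n.factorial := by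
  set δ := μ2 - μ1 with hδdef
  have hδ : 0 ≤ δ := by simp [hδdef]; linarith
  have hexp : Real.exp δ = ∑' k : ℕ, δ ^ k / k.factorial := by
    rw [Real.exp_eq_exp_ℝ, NormedSpace.exp_eq_tsum_div]
  have hf : Summable fun k : ℕ => ‖δ ^ k / (k.factorial : ℝ)‖ := by
    simp only [Real.norm_eq_abs]
    exact (Real.summable_pow_div_factorial δ).abs
  have hg : Summable fun n : ℕ => ‖c n * μ1 ^ n / (n.factorial : ℝ)‖ := by
    simp only [Real.norm_eq_abs]
    exact (aux_summable hc0 hc1 hμ1).abs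
  have hprod : (∑' k : ℕ, δ ^ k / (k.factorial : ℝ))
        * (∑' n : ℕ, c n * μ1 ^ n / (n.factorial : ℝ))
      = ∑' n : ℕ, ∑ kl ∈ Finset.HasAntidiagonal.antidiagonal n,
          (δ ^ kl.1 / (kl.1.factorial : ℝ)) * (c kl.2 * μ1 ^ kl.2 / (kl.2.factorial : ℝ)) :=
    tsum_mul_tsum_eq_tsum_sum_antidiagonal_of_summable_norm hf hg
  rw [hexp, hprod]
  have hsum1 : Summable (fun n : ℕ => ∑ kl ∈ Finset.HasAntidiagonal.antidiagonal n,
      (δ ^ kl.1 / (kl.1.factorial : ℝ)) * (c kl.2 * μ1 ^ kl.2 / (kl.2.factorial : ℝ))) :=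
    summable_sum_mul_antidiagonal_of_summable_mul
      (f := fun k => δ ^ k / (k.factorial : ℝ))
      (g := fun m => c m * μ1 ^ m / (m.factorial : ℝ))
      (summable_mul_of_summable_norm hf hg)
  apply Summable.tsum_le_tsum ?_ hsum1 (aux_summable hc0 hc1 (le_trans hμ1 h12))
  intro n
  calc ∑ ij ∈ Finset.HasAntidiagonal.antidiagonal n,
        δ ^ ij.1 / (ij.1.factorial : ℝ) * (c ij.2 * μ1 ^ ij.2 / ij.2.factorial)
      ≤ ∑ ij ∈ Finset.HasAntidiagonal.antidiagonal n,
        c n * (δ ^ ij.1 * μ1 ^ ij.2 / (ij.1.factorial * ij.2.factorial)) := by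
        apply Finset.sum_le_sum
        intro ij hij
        have hmem : ij.1 + ij.2 = n := Finset.HasAntidiagonal.mem_antidiagonal.1 hij
        have h2n : ij.2 ≤ n := by omega
        have hcle : c ij.2 ≤ c n := hm h2n
        have hineq : δ ^ ij.1 / (ij.1.factorial : ℝ) * (c ij.2 * μ1 ^ ij.2 / ij.2.factorial)
            = c ij.2 * (δ ^ ij.1 * μ1 ^ ij.2 / (ij.1.factorial * ij.2.factorial)) := by
          field_simp
        rw [hineq]
        apply mul_le_mul_of_nonneg_right hcle
        positivity
    _ = c n * (μ2 ^ n / n.factorial) := by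
        rw [← Finset.mul_sum]
        congr 1
        have hμ2 : μ2 = δ + μ1 := by rw [hδdef]; ring
        rw [hμ2, add_pow, Finset.Nat.sum_antidiagonal_eq_sum_range_succ_mk, Finset.sum_div]
        apply Finset.sum_congr rfl
        intro k hk
        have hkn : k ≤ n := Nat.lt_succ_iff.1 (Finset.mem_range.1 hk)
        have hfac : ((n.choose k : ℝ)) * (k.factorial : ℝ) * ((n - k).factorial : ℝ)
            = (n.factorial : ℝ) := by
          exact_mod_cast Nat.choose_mul_factorial_mul_factorial hkn
        have hk0 : (k.factorial : ℝ) ≠ 0 := by exact_mod_cast (Nat.factorial_pos k).ne'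
        have hnk0 : ((n - k).factorial : ℝ) ≠ 0 := by
          exact_mod_cast (Nat.factorial_pos (n - k)).ne'
        have hn0 : (n.factorial : ℝ) ≠ 0 := by exact_mod_cast (Nat.factorial_pos n).ne'
        rw [div_eq_div_iff (by positivity) hn0]
        linear_combination (-(δ ^ k * μ1 ^ (n - k))) * hfac
    _ = c n * μ2 ^ n / n.factorial := by ring

theorem stmt9 (lam : ℝ) (hlam : 0 ≤ lam) (K : ℕ) (hK : 0 < K) :
    MonotoneOn
      (fun γ : ℝ => ∑' n : ℕ,
        ((γ / 2) ^ n * Real.exp (-(γ / 2)) / n.factorial) *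
          (upperGamma (n + K) (lam / 2) / Real.Gamma (n + K)))
      (Set.Ici 0) := by
  have hν0 : 0 ≤ lam / 2 := by linarith
  obtain ⟨c, hc⟩ : ∃ c : ℕ → ℝ,
      c = fun n : ℕ => upperGamma ((n : ℝ) + K) (lam / 2) / Real.Gamma ((n : ℝ) + K) :=
    ⟨_, rfl⟩
  have hK1 : (1 : ℝ) ≤ (K : ℝ) := by exact_mod_cast hK
  have ha1 : ∀ n : ℕ, (1 : ℝ) ≤ (n : ℝ) + K := fun n => by
    have : (0:ℝ) ≤ (n:ℝ) := Nat.cast_nonneg n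
    linarith
  have hapos : ∀ n : ℕ, (0 : ℝ) < (n : ℝ) + K := fun n => lt_of_lt_of_le one_pos (ha1 n)
  have hGpos : ∀ n : ℕ, 0 < Real.Gamma ((n : ℝ) + K) := fun n => Real.Gamma_pos_of_pos (hapos n)
  have hc_nonneg : ∀ n, 0 ≤ c n := fun n => by
    rw [hc]
    exact div_nonneg (upperGamma_nonneg hν0) (hGpos n).le
  have hc_le_one : ∀ n, c n ≤ 1 := fun n => by
    rw [hc]
    exact (div_le_one (hGpos n)).2 (upperGamma_le_Gamma (hapos n) hν0)
  have hc_mono : Monotone c := by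
    apply monotone_nat_of_le_succ
    intro n
    have hcast : ((n + 1 : ℕ) : ℝ) + K = ((n : ℝ) + K) + 1 := by push_cast; ring
    have h := upperGamma_succ (ha1 n) hν0
    rw [hc]
    simp only [hcast, h, Real.Gamma_add_one (hapos n).ne']
    have hsplit : ((lam/2) ^ ((n:ℝ) + K) * Real.exp (-(lam/2))
          + ((n:ℝ) + K) * upperGamma ((n:ℝ) + K) (lam/2))
        / (((n:ℝ) + K) * Real.Gamma ((n:ℝ) + K))
        = (lam/2) ^ ((n:ℝ) + K) * Real.exp (-(lam/2))
            / (((n:ℝ) + K) * Real.Gamma ((n:ℝ) + K))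
          + upperGamma ((n:ℝ) + K) (lam/2) / Real.Gamma ((n:ℝ) + K) := by
      field_simp
    rw [hsplit]
    have h0 : 0 ≤ (lam/2) ^ ((n:ℝ) + K) * Real.exp (-(lam/2))
        / (((n:ℝ) + K) * Real.Gamma ((n:ℝ) + K)) := by
      apply div_nonneg (mul_nonneg (Real.rpow_nonneg hν0 _) (Real.exp_nonneg _))
      exact mul_nonneg (hapos n).le (hGpos n).le
    linarith
  have hrw : ∀ γ : ℝ, (∑' n : ℕ,
        ((γ / 2) ^ n * Real.exp (-(γ / 2)) / n.factorial) *
          (upperGamma ((n : ℝ) + K) (lam / 2) / Real.Gamma ((n : ℝ) + K)))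
      = Real.exp (-(γ / 2)) * ∑' n : ℕ, c n * (γ / 2) ^ n / n.factorial := by
    intro γ
    rw [← tsum_mul_left]
    apply tsum_congr
    intro n
    rw [hc]
    ring
  intro γ1 h1 γ2 h2 hle
  simp only
  rw [hrw γ1, hrw γ2]
  have h1' : (0:ℝ) ≤ γ1 / 2 := by have := h1.out; linarith
  have hle' : γ1 / 2 ≤ γ2 / 2 := by linarith
  calc Real.exp (-(γ1 / 2)) * ∑' n : ℕ, c n * (γ1 / 2) ^ n / n.factorial
      = Real.exp (-(γ2 / 2)) * (Real.exp (γ2 / 2 - γ1 / 2)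
          * ∑' n : ℕ, c n * (γ1 / 2) ^ n / n.factorial) := by
        rw [← mul_assoc, ← Real.exp_add]
        congr 2
        ring
    _ ≤ Real.exp (-(γ2 / 2)) * ∑' n : ℕ, c n * (γ2 / 2) ^ n / n.factorial := by
        apply mul_le_mul_of_nonneg_left
          (aux_key hc_nonneg hc_le_one hc_mono h1' hle') (Real.exp_nonneg _)
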